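/- Let F be a group acting on a group G by group automorphisms, let g, h ∈ G, and let F_g and F_h denote the stabilizers in F of g and h. Let D ⊆ F be a complete set of representatives for the double cosets F_h\F/F_g. Then the pointwise product of orbits satisfies orbit_F(g) · orbit_F(h) = ⋃_{x ∈ D} orbit_F((x•g)·h), where orbit_F(g) · orbit_F(h) = {a·b : a ∈ orbit_F(g), b ∈ orbit_F(h)}. -/

import Mathlib

open scoped Pointwise

/-- Let `F` act on a group `G` by group automorphisms, let `g, h ∈ G`, and let `D ⊆ F` be a
complete set of representatives for the double cosets `F_h\F/F_g` of the stabilizers of `g`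
and `h`.  Then `orbit_F(g) · orbit_F(h) = ⋃_{x ∈ D} orbit_F((x • g) * h)` (pointwise product of
subsets of `G`). -/
theorem orbit_mul_orbit_eq_iUnion {F G : Type*} [Group F] [Group G] [MulDistribMulAction F G]
    (g h : G) (D : Set F)
    (hD : ∀ y : F, ∃! x, x ∈ D ∧
      y ∈ DoubleCoset.doubleCoset x (MulAction.stabilizer F h : Set F) (MulAction.stabilizer F g : Set F)) :
    MulAction.orbit F g * MulAction.orbit F h = ⋃ x ∈ D, MulAction.orbit F ((x • g) * h) := by
  ext c
  simp only [Set.mem_mul, Set.mem_iUnion, MulAction.mem_orbit_iff]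
  constructor
  · rintro ⟨_, ⟨a, rfl⟩, _, ⟨b, rfl⟩, rfl⟩
    obtain ⟨x, ⟨hxD, hy⟩, -⟩ := hD (b⁻¹ * a)
    obtain ⟨s, hs, t, ht, hst⟩ := DoubleCoset.mem_doubleCoset.1 hy
    refine ⟨x, hxD, b * s, ?_⟩
    have hs' : s • h = h := hs
    have ht' : t • g = g := ht
    have ha : a = b * (s * x * t) := by rw [← hst, mul_inv_cancel_left]
    subst ha
    simp [mul_smul, smul_mul', hs', ht']
  · rintro ⟨x, hxD, b, rfl⟩
    exact ⟨(b * x) • g, ⟨b * x, rfl⟩, b • h, ⟨b, rfl⟩, by rw [smul_mul', mul_smul]⟩
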